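/- arXiv:2004.03770 — 2 statements merged into one kernel-verified Lean document; each statement's English description precedes it below -/
import Mathlib

section
/- Let $F$ be a field of characteristic $p > 0$ and let $G \subseteq F$ be a finite subgroup of the additive group of $F$. Then the polynomial $a(X) = \prod_{\sigma \in G}(X - \sigma) \in F[X]$ is additive, i.e., $a(X + Y) = a(X) + a(Y)$ as polynomials in $F[X, Y]$. -/
open Polynomial

/-- A univariate polynomial `a` is *additive* if `a(X + Y) = a(X) + a(Y)`
as polynomials in two variables. -/
def Polynomial.IsAdditive {F : Type*} [CommRing F] (a : Polynomial F) : Prop :=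
  Polynomial.aeval (MvPolynomial.X 0 + MvPolynomial.X 1 : MvPolynomial (Fin 2) F) a =
    Polynomial.aeval (MvPolynomial.X 0 : MvPolynomial (Fin 2) F) a +
      Polynomial.aeval (MvPolynomial.X 1 : MvPolynomial (Fin 2) F) a

theorem additive_of_prod_roots_finite_addSubgroup
    (F : Type*) [Field F] (p : ℕ) (hp : 0 < p) [CharP F p]
    (G : AddSubgroup F) (hG : (G : Set F).Finite) :
    (∏ σ ∈ hG.toFinset, (X - C σ)).IsAdditive := by
  classical
  set s := hG.toFinset with hs
  set a : Polynomial F := ∏ σ ∈ s, (X - C σ) with ha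
  -- work in F[X][Y]
  set A : Polynomial (Polynomial F) :=
    aeval (C Polynomial.X + Polynomial.X) a with hA
  have hAprod : A = ∏ σ ∈ s, (C Polynomial.X + Polynomial.X - C (C σ)) := by
    simp [hA, ha, map_prod, map_sub, aeval_X, aeval_C]
  have haY : aeval (Polynomial.X : Polynomial (Polynomial F)) a = a.map C := by
    rw [ha, map_prod, Polynomial.map_prod]
    refine Finset.prod_congr rfl fun σ _ => ?_
    simp [map_sub, Polynomial.map_sub]
  have haX : aeval (C Polynomial.X : Polynomial (Polynomial F)) a = C a := by
    rw [ha, map_prod, map_prod]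
    refine Finset.prod_congr rfl fun σ _ => ?_
    simp only [map_sub, aeval_X, aeval_C, Polynomial.algebraMap_apply,
      Polynomial.algebraMap_eq, C_sub]
  set Δ : Polynomial (Polynomial F) := A - C a - a.map C with hΔ
  have hmem : ∀ x : F, x ∈ s ↔ x ∈ G := fun x => hG.mem_toFinset
  have h0 : (0 : F) ∈ s := (hmem 0).2 G.zero_mem
  have hscard : 0 < s.card := Finset.card_pos.2 ⟨0, h0⟩
  have hamonic : a.Monic := monic_prod_of_monic _ _ fun σ _ => monic_X_sub_C σ
  have hfact : ∀ σ : F, C Polynomial.X + Polynomial.X - C (C σ) =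
      Polynomial.X + C (Polynomial.X - C σ) := by
    intro σ; rw [map_sub]; ring
  have hmapmonic : (a.map (C : F →+* Polynomial F)).Monic := hamonic.map C
  have hAmonic : A.Monic := by
    rw [hAprod]
    exact monic_prod_of_monic _ _ fun σ _ => by rw [hfact]; exact monic_X_add_C _
  have hAdeg : A.natDegree = s.card := by
    rw [hAprod, natDegree_prod_of_monic _ _ fun σ _ => by rw [hfact]; exact monic_X_add_C _]
    trans ∑ σ ∈ s, 1
    · exact Finset.sum_congr rfl fun σ _ => by rw [hfact]; exact natDegree_X_add_C _
    · simp
  have hsub : (A - a.map C).degree < s.card := by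
    have hd1 : A.degree = (s.card : WithBot ℕ) := by
      rw [degree_eq_natDegree hAmonic.ne_zero, hAdeg]
    have h1 : A.degree = (a.map (C : F →+* Polynomial F)).degree := by
      rw [hd1, degree_eq_natDegree hmapmonic.ne_zero, hamonic.natDegree_map,
        ha, natDegree_prod_of_monic _ _ fun σ _ => monic_X_sub_C σ]
      simp
    have h2 := degree_sub_lt h1 hAmonic.ne_zero
      (by rw [hAmonic.leadingCoeff, hmapmonic.leadingCoeff])
    rwa [hd1] at h2
  have hΔdeg : Δ.natDegree < s.card := by
    have hCa : (C a).degree < (s.card : WithBot ℕ) :=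
      lt_of_le_of_lt degree_C_le (by exact_mod_cast WithBot.coe_lt_coe.2 hscard)
    have heq : Δ = (A - a.map C) - C a := by rw [hΔ]; ring
    have hd : Δ.degree < (s.card : WithBot ℕ) := by
      rw [heq]
      exact lt_of_le_of_lt (degree_sub_le _ _) (max_lt hsub hCa)
    by_cases h : Δ = 0
    · rw [h]; simpa using hscard
    · exact (natDegree_lt_iff_degree_lt h).2 hd
  have heval : ∀ σ ∈ s, Δ.eval (C σ) = 0 := by
    intro σ hσ
    have hσG : σ ∈ G := (hmem σ).1 hσ
    have e1 : A.eval (C σ) = a := by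
      rw [hAprod, eval_prod, ha]
      refine Finset.prod_nbij (fun τ => τ - σ) ?_ ?_ ?_ ?_
      · intro τ hτ
        exact (hmem _).2 (G.sub_mem ((hmem τ).1 hτ) hσG)
      · intro x _ y _ h; simpa using h
      · intro τ hτ
        exact ⟨τ + σ, (hmem _).2 (G.add_mem ((hmem τ).1 hτ) hσG), by simp⟩
      · intro τ _
        simp only [eval_sub, eval_add, eval_C, eval_X, map_sub, C_sub]
        ring
    have e2 : (a.map (C : F →+* Polynomial F)).eval (C σ) = C (a.eval σ) := by
      rw [eval_map, eval₂_at_apply]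
    have e3 : a.eval σ = 0 := by
      rw [ha, eval_prod]
      exact Finset.prod_eq_zero hσ (by simp)
    rw [hΔ]
    simp [e1, e2, e3]
  have hΔ0 : Δ = 0 := by
    refine Polynomial.eq_zero_of_natDegree_lt_card_of_eval_eq_zero' Δ (s.image C) ?_ ?_
    · intro i hi
      obtain ⟨σ, hσ, rfl⟩ := Finset.mem_image.1 hi
      exact heval σ hσ
    · rwa [Finset.card_image_of_injective _ C_injective]
  have key : A = C a + a.map C := by
    have h : A - (C a + a.map C) = 0 := by rw [← hΔ0, hΔ]; ring
    exact sub_eq_zero.1 h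
  unfold Polynomial.IsAdditive
  set φ : Polynomial (Polynomial F) →ₐ[F] MvPolynomial (Fin 2) F :=
    Polynomial.aevalTower (Polynomial.aeval (MvPolynomial.X 0)) (MvPolynomial.X 1) with hφ
  have hφC : φ (C Polynomial.X) = MvPolynomial.X 0 := by
    simp [hφ, aevalTower_C]
  have hφX : φ Polynomial.X = MvPolynomial.X 1 := by
    simp [hφ]
  have t1 := aeval_algHom_apply φ (C Polynomial.X + Polynomial.X) a
  have t2 := aeval_algHom_apply φ (C Polynomial.X) a
  have t3 := aeval_algHom_apply φ Polynomial.X a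
  rw [map_add, hφC, hφX] at t1
  rw [hφC] at t2
  rw [hφX] at t3
  rw [t1, t2, t3, haX, haY, ← hA, key, map_add]
end

section
/- Let $L/K$ be a finite totally ramified Galois extension of complete discretely valued fields with Galois group $G$, residue field $E$ of characteristic $p > 0$, and uniformizer $\alpha$ of $L$. Let $i \geq 1$ be an integer with $G_i \neq 1$ and $G_{i+1} = 1$. Then the map $\theta_i : G_i \to U_L^i / U_L^{i+1}$ sending $\sigma \mapsto \sigma(\alpha)/\alpha \bmod U_L^{i+1}$ is an injective group homomorphism independent of the choice of uniformizer $\alpha$. -/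
/-- A (normalized, surjective) discrete valuation on a field `K`, written additively
with values in `ℤ ∪ {∞}`. -/
structure DValuation (K : Type*) [Field K] where
  v : K → WithTop ℤ
  surj : Function.Surjective v
  eq_top_iff : ∀ x, v x = ⊤ ↔ x = 0
  map_one : v 1 = 0
  map_mul : ∀ x y, v (x * y) = v x + v y
  map_neg : ∀ x, v (-x) = v x
  add_ge : ∀ x y, min (v x) (v y) ≤ v (x + y)

namespace DValuation

variable {K : Type*} [Field K] (w : DValuation K)

/-- The valuation ring `𝒪_K = {x | v x ≥ 0}` of a discrete valuation. -/
def integers : Subring K where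
  carrier := {x | 0 ≤ w.v x}
  zero_mem' := by simp [(w.eq_top_iff 0).2 rfl]
  one_mem' := by simp [w.map_one]
  add_mem' := fun {a b} ha hb => le_trans (le_min ha hb) (w.add_ge a b)
  mul_mem' := fun {a b} ha hb => by
    simpa [w.map_mul] using add_nonneg ha hb
  neg_mem' := fun {a} ha => by simpa [w.map_neg] using ha

/-- The maximal ideal `𝔪_K = {x | v x > 0}` of the valuation ring. -/
def maxIdeal : Ideal w.integers where
  carrier := {x | 0 < w.v x.1}
  zero_mem' := by simp [(w.eq_top_iff 0).2 rfl]
  add_mem' := fun {a b} ha hb => lt_of_lt_of_le (lt_min ha hb) (w.add_ge a.1 b.1)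
  smul_mem' := fun r x hx => by
    have : w.v x.1 ≤ w.v r.1 + w.v x.1 := le_add_of_nonneg_left r.2
    simpa [w.map_mul] using lt_of_lt_of_le hx this

/-- Completeness of a field with respect to a discrete valuation, phrased via
Cauchy sequences. -/
def IsComplete : Prop :=
  ∀ a : ℕ → K,
    (∀ N : ℤ, ∃ M : ℕ, ∀ m ≥ M, ∀ n ≥ M, (N : WithTop ℤ) ≤ w.v (a m - a n)) →
    ∃ x : K, ∀ N : ℤ, ∃ M : ℕ, ∀ m ≥ M, (N : WithTop ℤ) ≤ w.v (a m - x)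

end DValuation

/-- The `i`-th lower-numbering ramification "set":
automorphisms acting trivially on `𝒪_L / 𝔪_L^{i+1}`. -/
def gset (K : Type*) {L : Type*} [Field K] [Field L] [Algebra K L]
    (vL : DValuation L) (i : ℕ) : Set (L ≃ₐ[K] L) :=
  {σ | ∀ x : L, 0 ≤ vL.v x → (((i : ℤ) + 1 : ℤ) : WithTop ℤ) ≤ vL.v (σ x - x)}

namespace DValuation
variable {L : Type*} [Field L] (w : DValuation L)

theorem v_zero : w.v 0 = ⊤ := (w.eq_top_iff 0).2 rfl

theorem v_ne_top {x : L} (h : x ≠ 0) : w.v x ≠ ⊤ := fun ht => h ((w.eq_top_iff x).1 ht)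

theorem ne_zero_of_v {x : L} {m : ℤ} (h : w.v x = (m : WithTop ℤ)) : x ≠ 0 := by
  intro hx; rw [hx, w.v_zero] at h; exact (WithTop.top_ne_coe) h

theorem v_pow {x : L} {m : ℤ} (hx : w.v x = (m : WithTop ℤ)) (k : ℕ) :
    w.v (x ^ k) = ((k * m : ℤ) : WithTop ℤ) := by
  induction k with
  | zero => simpa using w.map_one
  | succ k ih =>
      rw [pow_succ, w.map_mul, ih, hx, ← WithTop.coe_add]
      congr 1
      push_cast
      ring

theorem v_inv {x : L} {m : ℤ} (hx : w.v x = (m : WithTop ℤ)) :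
    w.v x⁻¹ = ((-m : ℤ) : WithTop ℤ) := by
  have hx0 : x ≠ 0 := w.ne_zero_of_v hx
  have h1 : w.v (x * x⁻¹) = 0 := by rw [mul_inv_cancel₀ hx0, w.map_one]
  rw [w.map_mul, hx] at h1
  rcases WithTop.ne_top_iff_exists.1 (w.v_ne_top (inv_ne_zero hx0)) with ⟨c, hc⟩
  rw [← hc, ← WithTop.coe_add] at h1
  have : m + c = 0 := WithTop.coe_injective h1
  rw [← hc]; congr 1; omega

theorem v_sub_ge (x y : L) : min (w.v x) (w.v y) ≤ w.v (x - y) := by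
  have := w.add_ge x (-y)
  rwa [w.map_neg, ← sub_eq_add_neg] at this

theorem v_add_eq_left {x y : L} (h : w.v x < w.v y) : w.v (x + y) = w.v x := by
  refine le_antisymm ?_ (le_trans (by simp [le_of_lt h]) (w.add_ge x y))
  have h2 : min (w.v (x + y)) (w.v y) ≤ w.v x := by
    have := w.v_sub_ge (x + y) y
    simpa using this
  rcases min_le_iff.1 h2 with h3 | h3
  · exact h3
  · exact absurd (lt_of_lt_of_le h h3) (lt_irrefl _)

theorem v_sum_ge {ι : Type*} (s : Finset ι) (f : ι → L) (c : WithTop ℤ)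
    (h : ∀ j ∈ s, c ≤ w.v (f j)) : c ≤ w.v (∑ j ∈ s, f j) := by
  classical
  induction s using Finset.induction_on with
  | empty => simp [w.v_zero]
  | @insert a s' hj ih =>
      rw [Finset.sum_insert hj]
      refine le_trans (le_min (h a (by simp)) (ih fun j hjs => h j (by simp [hjs]))) ?_
      exact w.add_ge _ _

end DValuation

lemma coe_nsmul_withtop (n : ℕ) (m : ℤ) :
    n • ((m : ℤ) : WithTop ℤ) = (((n : ℤ) * m : ℤ) : WithTop ℤ) := by
  induction n with
  | zero => simp
  | succ k ih =>
      rw [succ_nsmul, ih, ← WithTop.coe_add]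
      congr 1
      push_cast
      ring

lemma int_aux {n m m' j j' : ℤ} (hn : 0 < n) (h0 : 0 ≤ j) (h1 : j < n)
    (h0' : 0 ≤ j') (h1' : j' < n) (he : n * m + j = n * m' + j') : j = j' := by
  rcases lt_trichotomy m m' with h | h | h
  · exfalso; nlinarith [mul_le_mul_of_nonneg_left (by omega : m + 1 ≤ m') hn.le]
  · subst h; omega
  · exfalso; nlinarith [mul_le_mul_of_nonneg_left (by omega : m' + 1 ≤ m) hn.le]

theorem term_le {K L : Type*} [Field K] [Field L] [Algebra K L] [FiniteDimensional K L]
    (vK : DValuation K) (vL : DValuation L)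
    (hTR : ∀ x : K, vL.v (algebraMap K L x) = (Module.finrank K L) • vK.v x)
    (α : L) (hα : vL.v α = 1)
    (a : Fin (Module.finrank K L) → K) (j : Fin (Module.finrank K L)) :
    vL.v (∑ k, a k • α ^ (k : ℕ)) ≤ vL.v (a j • α ^ (j : ℕ)) := by
  classical
  have hnpos : 0 < Module.finrank K L := Module.finrank_pos
  have hα' : vL.v α = ((1 : ℤ) : WithTop ℤ) := by exact_mod_cast hα
  set f : Fin (Module.finrank K L) → L := fun k => a k • α ^ (k : ℕ) with hf
  have hterm : ∀ k : Fin (Module.finrank K L), a k ≠ 0 →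
      ∃ m : ℤ, vL.v (f k) = (((Module.finrank K L : ℤ) * m + k : ℤ) : WithTop ℤ) := by
    intro k hk
    rcases WithTop.ne_top_iff_exists.1 (vK.v_ne_top hk) with ⟨m, hm⟩
    refine ⟨m, ?_⟩
    rw [hf]
    simp only [Algebra.smul_def]
    rw [vL.map_mul, hTR, ← hm, coe_nsmul_withtop, vL.v_pow hα', ← WithTop.coe_add]
    congr 1
    push_cast
    ring
  set S : Finset (Fin (Module.finrank K L)) := Finset.univ.filter (fun k => a k ≠ 0) with hS
  by_cases hj : a j = 0
  · have h0 : f j = 0 := by simp [hf, hj]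
    show vL.v (∑ k, f k) ≤ vL.v (f j)
    rw [h0, vL.v_zero]; exact le_top
  · obtain ⟨j0, hj0S, hj0min⟩ :=
      Finset.exists_min_image S (fun k => vL.v (f k)) ⟨j, by simp [hS, hj]⟩
    have hj0ne : a j0 ≠ 0 := by simpa [hS] using hj0S
    obtain ⟨m0, hm0⟩ := hterm j0 hj0ne
    set c0 : ℤ := (Module.finrank K L : ℤ) * m0 + j0 with hc0
    have hrest : ((c0 + 1 : ℤ) : WithTop ℤ) ≤ vL.v (∑ k ∈ Finset.univ.erase j0, f k) := by
      apply vL.v_sum_ge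
      intro k hk
      by_cases hk0 : a k = 0
      · have h0 : f k = 0 := by simp [hf, hk0]
        rw [h0, vL.v_zero]; exact le_top
      · obtain ⟨m, hm⟩ := hterm k hk0
        have hge : vL.v (f j0) ≤ vL.v (f k) := hj0min k (by simp [hS, hk0])
        rw [hm0, hm] at hge
        have hle : c0 ≤ (Module.finrank K L : ℤ) * m + k := by exact_mod_cast hge
        have hne : (Module.finrank K L : ℤ) * m + (k : ℤ) ≠ c0 := by
          intro he
          have hkj : (k : ℤ) = (j0 : ℤ) := by
            refine int_aux (n := (Module.finrank K L : ℤ)) (m := m) (m' := m0)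
              (by exact_mod_cast hnpos) (Int.natCast_nonneg _) ?_ (Int.natCast_nonneg _) ?_ ?_
            · exact_mod_cast k.2
            · exact_mod_cast j0.2
            · rw [he, hc0]
          exact (Finset.ne_of_mem_erase hk) (Fin.ext (by exact_mod_cast hkj))
        rw [hm]
        exact_mod_cast (by omega : c0 + 1 ≤ (Module.finrank K L : ℤ) * m + (k : ℤ))
    have hsplit : f j0 = (∑ k, f k) - (∑ k ∈ Finset.univ.erase j0, f k) := by
      rw [eq_sub_iff_add_eq, add_comm]
      exact Finset.sum_erase_add _ _ (Finset.mem_univ j0)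
    have hmin : min (vL.v (∑ k, f k)) (vL.v (∑ k ∈ Finset.univ.erase j0, f k))
        ≤ ((c0 : ℤ) : WithTop ℤ) := by
      have h2 := vL.v_sub_ge (∑ k, f k) (∑ k ∈ Finset.univ.erase j0, f k)
      rw [← hsplit, hm0] at h2
      exact h2
    show vL.v (∑ k, f k) ≤ vL.v (f j)
    rcases min_le_iff.1 hmin with h | h
    · refine le_trans h ?_
      rw [← hm0]
      exact hj0min j (by simp [hS, hj])
    · exfalso
      have h3 := le_trans hrest h
      have h4 : (c0 + 1 : ℤ) ≤ c0 := by exact_mod_cast h3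
      omega


theorem exists_rep {K L : Type*} [Field K] [Field L] [Algebra K L] [FiniteDimensional K L]
    (vK : DValuation K) (vL : DValuation L)
    (hTR : ∀ x : K, vL.v (algebraMap K L x) = (Module.finrank K L) • vK.v x)
    (α : L) (hα : vL.v α = 1) (x : L) :
    ∃ a : Fin (Module.finrank K L) → K, x = ∑ k, a k • α ^ (k : ℕ) := by
  classical
  have hnpos : 0 < Module.finrank K L := Module.finrank_pos
  have hα' : vL.v α = ((1 : ℤ) : WithTop ℤ) := by exact_mod_cast hα
  have hα0 : α ≠ 0 := vL.ne_zero_of_v hα'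
  have hli : LinearIndependent K (fun k : Fin (Module.finrank K L) => α ^ (k : ℕ)) := by
    rw [Fintype.linearIndependent_iff]
    intro g hg k
    have h1 := term_le vK vL hTR α hα g k
    rw [hg, vL.v_zero] at h1
    have h2 : g k • α ^ (k : ℕ) = 0 := (vL.eq_top_iff _).1 (top_le_iff.1 h1)
    rcases smul_eq_zero.1 h2 with h | h
    · exact h
    · exact absurd h (pow_ne_zero _ hα0)
  haveI : Nonempty (Fin (Module.finrank K L)) := ⟨⟨0, hnpos⟩⟩
  let b := basisOfLinearIndependentOfCardEqFinrank hli (by simp)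
  have hb : ∀ k, b k = α ^ (k : ℕ) :=
    fun k => congrFun (coe_basisOfLinearIndependentOfCardEqFinrank hli (by simp)) k
  refine ⟨fun k => b.repr x k, ?_⟩
  conv_lhs => rw [← b.sum_repr x]
  exact Finset.sum_congr rfl fun k _ => by rw [hb]

theorem coef_nonneg {K L : Type*} [Field K] [Field L] [Algebra K L] [FiniteDimensional K L]
    (vK : DValuation K) (vL : DValuation L)
    (hTR : ∀ x : K, vL.v (algebraMap K L x) = (Module.finrank K L) • vK.v x)
    (α : L) (hα : vL.v α = 1)
    (a : Fin (Module.finrank K L) → K)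
    (h : 0 ≤ vL.v (∑ k, a k • α ^ (k : ℕ))) (k : Fin (Module.finrank K L)) :
    0 ≤ vL.v (algebraMap K L (a k)) := by
  by_cases hk : a k = 0
  · rw [hk, map_zero, vL.v_zero]; exact le_top
  · have hα' : vL.v α = ((1 : ℤ) : WithTop ℤ) := by exact_mod_cast hα
    rcases WithTop.ne_top_iff_exists.1 (vK.v_ne_top hk) with ⟨m, hm⟩
    have halg : vL.v (algebraMap K L (a k)) =
        (((Module.finrank K L : ℤ) * m : ℤ) : WithTop ℤ) := by
      rw [hTR, ← hm, coe_nsmul_withtop]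
    have hval : vL.v (a k • α ^ (k : ℕ)) =
        (((Module.finrank K L : ℤ) * m + k : ℤ) : WithTop ℤ) := by
      rw [Algebra.smul_def, vL.map_mul, halg, vL.v_pow hα', ← WithTop.coe_add]
      congr 1
      push_cast
      ring
    have h1 := le_trans h (term_le vK vL hTR α hα a k)
    rw [hval] at h1
    have h2 : (0 : ℤ) ≤ (Module.finrank K L : ℤ) * m + k := by exact_mod_cast h1
    have hkb : (k : ℤ) < (Module.finrank K L : ℤ) := by exact_mod_cast k.2
    have hm0 : 0 ≤ m := by nlinarith [Int.natCast_nonneg (k : ℕ)]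
    rw [halg]
    exact_mod_cast mul_nonneg (by positivity) hm0

lemma wt_shift {c e : ℤ} {x : WithTop ℤ} (h : (c : WithTop ℤ) ≤ x) :
    ((c + e : ℤ) : WithTop ℤ) ≤ x + (e : ℤ) := by
  rw [WithTop.coe_add]; exact add_le_add_left h _

lemma wt_unshift {c e : ℤ} {x : WithTop ℤ} (h : (c : WithTop ℤ) ≤ x + ((e : ℤ) : WithTop ℤ)) :
    ((c - e : ℤ) : WithTop ℤ) ≤ x := by
  have h2 := add_le_add_left h (((-e : ℤ) : WithTop ℤ))
  rw [add_assoc, ← WithTop.coe_add, ← WithTop.coe_add] at h2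
  simpa [sub_eq_add_neg] using h2

/-- Proposition: for the last ramification jump `i`, the map
`θ_i : G_i → U_L^i/U_L^{i+1}`, `σ ↦ σ(α)/α`, is an injective group homomorphism
independent of the choice of the uniformizer `α`.  Congruences modulo
`U_L^{i+1}` are written out explicitly:  `u ≡ u' (mod U_L^{i+1})` means
`v_L (u/u' - 1) ≥ i + 1`. -/
theorem theta_injective_hom_independent_of_uniformizer
    (K L : Type*) [Field K] [Field L] [Algebra K L] [FiniteDimensional K L]
    [IsGalois K L]
    (vK : DValuation K) (vL : DValuation L)
    (hKc : vK.IsComplete) (hLc : vL.IsComplete)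
    (hTR : ∀ x : K, vL.v (algebraMap K L x) = (Module.finrank K L) • vK.v x)
    (p : ℕ) (hp : p.Prime) (hres : 0 < vK.v (p : K))
    (α : L) (hα : vL.v α = 1)
    (i : ℕ) (hi : 1 ≤ i)
    (hne : gset K vL i ≠ {(1 : L ≃ₐ[K] L)})
    (htriv : gset K vL (i + 1) = {(1 : L ≃ₐ[K] L)}) :
    -- `θ_i` lands in `U_L^i/U_L^{i+1}`
    (∀ σ ∈ gset K vL i, ((i : ℤ) : WithTop ℤ) ≤ vL.v (σ α / α - 1)) ∧
    -- `θ_i` is a group homomorphism (modulo `U_L^{i+1}`)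
    (∀ σ ∈ gset K vL i, ∀ τ ∈ gset K vL i,
      (((i : ℤ) + 1 : ℤ) : WithTop ℤ) ≤
        vL.v ((σ (τ α) / α) / ((σ α / α) * (τ α / α)) - 1)) ∧
    -- `θ_i` is injective (modulo `U_L^{i+1}`)
    (∀ σ ∈ gset K vL i,
      (((i : ℤ) + 1 : ℤ) : WithTop ℤ) ≤ vL.v (σ α / α - 1) → σ = 1) ∧
    -- `θ_i` is independent of the uniformizer (modulo `U_L^{i+1}`)
    (∀ α' : L, vL.v α' = 1 → ∀ σ ∈ gset K vL i,
      (((i : ℤ) + 1 : ℤ) : WithTop ℤ) ≤ vL.v ((σ α / α) / (σ α' / α') - 1)) := by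
  
  classical
  have hα' : vL.v α = ((1 : ℤ) : WithTop ℤ) := by exact_mod_cast hα
  have hα0 : α ≠ 0 := vL.ne_zero_of_v hα'
  have hαinv : vL.v α⁻¹ = ((-1 : ℤ) : WithTop ℤ) := vL.v_inv hα'
  have hαpos : (0 : WithTop ℤ) ≤ vL.v α := by
    rw [hα']; exact_mod_cast (by norm_num : (0:ℤ) ≤ 1)
  -- basic facts for σ in G_i
  have hGα : ∀ σ ∈ gset K vL i, (((i : ℤ) + 1 : ℤ) : WithTop ℤ) ≤ vL.v (σ α - α) :=
    fun σ hσ => hσ α hαpos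
  have hGvα : ∀ σ ∈ gset K vL i, vL.v (σ α) = ((1 : ℤ) : WithTop ℤ) := by
    intro σ hσ
    have h1 : vL.v α < vL.v (σ α - α) := by
      refine lt_of_lt_of_le ?_ (hGα σ hσ)
      rw [hα']
      exact_mod_cast (by omega : (1 : ℤ) < (i : ℤ) + 1)
    have h2 := vL.v_add_eq_left h1
    rw [show α + (σ α - α) = σ α by ring, hα'] at h2
    exact h2
  have hGu : ∀ σ ∈ gset K vL i, vL.v (σ α / α) = ((0 : ℤ) : WithTop ℤ) := by
    intro σ hσ
    rw [div_eq_mul_inv, vL.map_mul, hGvα σ hσ, hαinv, ← WithTop.coe_add]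
    norm_num
  refine ⟨?_, ?_, ?_, ?_⟩
  · -- θ_i lands in U^i/U^{i+1}
    intro σ hσ
    have heq : σ α / α - 1 = (σ α - α) * α⁻¹ := by field_simp
    rw [heq, vL.map_mul, hαinv]
    have h1 := wt_shift (e := -1) (hGα σ hσ)
    rwa [show (i : ℤ) + 1 + -1 = (i : ℤ) by ring] at h1
  · -- homomorphism
    intro σ hσ τ hτ
    set u := τ α / α with hu_def
    have hu : vL.v u = ((0 : ℤ) : WithTop ℤ) := hGu τ hτ
    have hu0 : u ≠ 0 := vL.ne_zero_of_v hu
    have hσu : (((i : ℤ) + 1 : ℤ) : WithTop ℤ) ≤ vL.v (σ u - u) := by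
      refine hσ u ?_
      rw [hu]
      exact le_refl _
    have hσα0 : σ α ≠ 0 := fun h => hα0 (by simpa using congrArg σ.symm h)
    have hσu0 : σ u ≠ 0 := fun h => hu0 (by simpa using congrArg σ.symm h)
    have hτα_eq : τ α = u * α := by rw [hu_def]; field_simp
    have hστ : σ (τ α) = σ u * σ α := by rw [hτα_eq, map_mul]
    have key : (σ (τ α) / α) / ((σ α / α) * u) - 1 = (σ u - u) * u⁻¹ := by
      rw [hστ]
      field_simp
    rw [key, vL.map_mul, vL.v_inv hu]
    have h1 := wt_shift (e := -0) hσu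
    rwa [show (i : ℤ) + 1 + -0 = (i : ℤ) + 1 by ring] at h1
  · -- injectivity
    intro σ hσ hθ
    have heq : σ α / α - 1 = (σ α - α) * α⁻¹ := by field_simp
    rw [heq, vL.map_mul, hαinv] at hθ
    have hσα2 : (((i : ℤ) + 2 : ℤ) : WithTop ℤ) ≤ vL.v (σ α - α) := by
      have h1 := wt_unshift hθ
      rwa [show (i : ℤ) + 1 - (-1) = (i : ℤ) + 2 by ring] at h1
    have hvσα : vL.v (σ α) = ((1 : ℤ) : WithTop ℤ) := hGvα σ hσ
    have hmem : σ ∈ gset K vL (i + 1) := by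
      intro x hx
      obtain ⟨a, rfl⟩ := exists_rep vK vL hTR α hα x
      have hcoef : ∀ k, 0 ≤ vL.v (algebraMap K L (a k)) :=
        coef_nonneg vK vL hTR α hα a hx
      have hσx : σ (∑ k, a k • α ^ (k : ℕ)) - (∑ k, a k • α ^ (k : ℕ)) =
          ∑ k, a k • ((σ α) ^ (k : ℕ) - α ^ (k : ℕ)) := by
        rw [map_sum, ← Finset.sum_sub_distrib]
        refine Finset.sum_congr rfl fun k _ => ?_
        rw [map_smul, map_pow, smul_sub]
      rw [hσx]
      have hbound : ((((i + 1 : ℕ) : ℤ) + 1 : ℤ) : WithTop ℤ) =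
          (((i : ℤ) + 2 : ℤ) : WithTop ℤ) := by congr 1
      rw [hbound]
      apply vL.v_sum_ge
      intro k _
      rw [Algebra.smul_def, vL.map_mul, ← geom_sum₂_mul (σ α) α (k : ℕ), vL.map_mul]
      have hg : (0 : WithTop ℤ) ≤
          vL.v (∑ l ∈ Finset.range (k : ℕ), (σ α) ^ l * α ^ ((k : ℕ) - 1 - l)) := by
        apply vL.v_sum_ge
        intro l _
        rw [vL.map_mul, vL.v_pow hvσα, vL.v_pow hα', ← WithTop.coe_add]
        exact_mod_cast
          (by positivity : (0 : ℤ) ≤ (l : ℤ) * 1 + (((k : ℕ) - 1 - l : ℕ) : ℤ) * 1)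
      calc (((i : ℤ) + 2 : ℤ) : WithTop ℤ)
          = 0 + (0 + (((i : ℤ) + 2 : ℤ) : WithTop ℤ)) := by rw [zero_add, zero_add]
        _ ≤ vL.v (algebraMap K L (a k)) +
            (vL.v (∑ l ∈ Finset.range (k : ℕ), (σ α) ^ l * α ^ ((k : ℕ) - 1 - l)) +
              vL.v (σ α - α)) :=
            add_le_add (hcoef k) (add_le_add hg hσα2)
    have : σ ∈ ({(1 : L ≃ₐ[K] L)} : Set _) := htriv ▸ hmem
    exact Set.mem_singleton_iff.1 this
  · -- independence of uniformizer
    intro α' hα'1 σ hσ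
    have hα'' : vL.v α' = ((1 : ℤ) : WithTop ℤ) := by exact_mod_cast hα'1
    have hα'0 : α' ≠ 0 := vL.ne_zero_of_v hα''
    set u := α' / α with hu_def
    have hu : vL.v u = ((0 : ℤ) : WithTop ℤ) := by
      rw [hu_def, div_eq_mul_inv, vL.map_mul, hα'', hαinv, ← WithTop.coe_add]
      norm_num
    have hu0 : u ≠ 0 := vL.ne_zero_of_v hu
    have hσu : (((i : ℤ) + 1 : ℤ) : WithTop ℤ) ≤ vL.v (σ u - u) := by
      refine hσ u ?_
      rw [hu]
      exact le_refl _
    have hvσu : vL.v (σ u) = ((0 : ℤ) : WithTop ℤ) := by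
      have h1 : vL.v u < vL.v (σ u - u) := by
        refine lt_of_lt_of_le ?_ hσu
        rw [hu]
        exact_mod_cast (by omega : (0 : ℤ) < (i : ℤ) + 1)
      have h2 := vL.v_add_eq_left h1
      rw [show u + (σ u - u) = σ u by ring, hu] at h2
      exact h2
    have hσu0 : σ u ≠ 0 := vL.ne_zero_of_v hvσu
    have hσα0 : σ α ≠ 0 := fun h => hα0 (by simpa using congrArg σ.symm h)
    have hα'_eq : α' = u * α := by rw [hu_def]; field_simp
    have hσα' : σ α' = σ u * σ α := by rw [hα'_eq, map_mul]
    have key : (σ α / α) / (σ α' / α') - 1 = (u - σ u) * (σ u)⁻¹ := by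
      rw [hσα', hα'_eq]
      field_simp
    rw [key, show u - σ u = -(σ u - u) by ring, vL.map_mul, vL.map_neg, vL.v_inv hvσu]
    have h1 := wt_shift (e := -0) hσu
    rwa [show (i : ℤ) + 1 + -0 = (i : ℤ) + 1 by ring] at h1
end
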